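/- arXiv:2412.10024 — 5 statements merged into one kernel-verified Lean document; each statement's English description precedes it below -/
import Mathlib

section
/- In the discrimination setting, fix δ ∈ (0,1) and let p̂(δ) := δ·(1/√(1+3δ²) − 1/2). Then welfare and inequality are both strictly decreasing in the advisor's partiality on [0, p̂(δ)]: for all 0 ≤ p < p' ≤ p̂(δ), W(p', δ) < W(p, δ) and I(p', δ) < I(p, δ). -/
noncomputable section

/-! Discrimination setting (Section 5.2 of the paper): `K = 2`, prior means `0`,
prior variances `Σ⁰₁ = Σ⁰₂ = 1`, budget `T = 1`.  For discrimination level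
`δ ∈ (0,1)` the politician's weights are `((1+δ)/2, (1−δ)/2)`; for partiality
level `p ∈ [0,1)` the advisor's weights are `((1−p)/2, (1+p)/2)`.

* `ah1 p δ, ah2 p δ` are the auxiliary weights `α̂₁(p,δ), α̂₂(p,δ)`.
* `tau2aux p δ` is `τ₂^aux(p,δ)` and `tau2star p δ = min{τ₂^aux(p,δ), 1}` is the
  advisor's equilibrium allocation of tests to group 2 (group 1 gets the rest).
* `omega τ₂ δ` is utilitarian welfare as a function of the allocation, and
  `W p δ = ω(τ₂*(p,δ), δ)` is equilibrium welfare.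
* `Dlt τ₂ δ` is the difference of the two groups' ex ante expected utilities and
  `Ineq p δ = |Δ(τ₂*(p,δ), δ)|` is equilibrium inequality. -/

/-- Auxiliary weight `α̂₁(p,δ)`. -/
def ah1 (p δ : ℝ) : ℝ :=
  if p < (1 - δ) / 2 then (1 / 2) * Real.sqrt ((1 + δ) * (1 - 2 * p - δ)) else 0

/-- Auxiliary weight `α̂₂(p,δ)`. -/
def ah2 (p δ : ℝ) : ℝ := (1 / 2) * Real.sqrt ((1 - δ) * (1 + 2 * p + δ))

/-- `τ₂^aux(p,δ)`. -/
def tau2aux (p δ : ℝ) : ℝ := (2 * ah2 p δ - ah1 p δ) / (ah1 p δ + ah2 p δ)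

/-- The advisor's equilibrium allocation of tests to group 2, `τ₂*(p,δ)`. -/
def tau2star (p δ : ℝ) : ℝ := min (tau2aux p δ) 1

/-- Utilitarian welfare `ω(τ₂, δ)` from splitting the budget as `(1−τ₂, τ₂)`. -/
def omega (τ2 δ : ℝ) : ℝ :=
  -3 - δ ^ 2 + ((1 + δ) ^ 2 / 2 + (1 + δ) * (1 - τ2)) / (2 - τ2)
    + ((1 - δ) ^ 2 / 2 + (1 - δ) * τ2) / (1 + τ2)

/-- Equilibrium welfare `W(p,δ)`. -/
def W (p δ : ℝ) : ℝ := omega (tau2star p δ) δ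

/-- Difference `Δ(τ₂,δ)` of the two groups' ex ante expected utilities. -/
def Dlt (τ2 δ : ℝ) : ℝ :=
  (1 + δ) * (1 - τ2) / (2 - τ2) - (1 - δ) * τ2 / (1 + τ2)

/-- Equilibrium inequality `I(p,δ)`. -/
def Ineq (p δ : ℝ) : ℝ := |Dlt (tau2star p δ) δ|

lemma omega_AB (δ A B : ℝ) (hA : 0 < A) (hB : 0 < B) :
    omega ((2*B - A)/(A+B)) δ
      = -1 - δ^2 - (1-δ^2)*(A^2+B^2+2*(A*B))/(6*(A*B)) := by
  have hA' : A ≠ 0 := ne_of_gt hA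
  have hB' : B ≠ 0 := ne_of_gt hB
  have hAB : A + B ≠ 0 := by positivity
  have h2 : (2:ℝ) - (2*B - A)/(A+B) = 3*A/(A+B) := by field_simp; ring
  have h1 : (1:ℝ) + (2*B - A)/(A+B) = 3*B/(A+B) := by field_simp; ring
  unfold omega; rw [h2, h1]; field_simp; ring

lemma Dlt_AB (δ A B : ℝ) (hA : 0 < A) (hB : 0 < B) :
    Dlt ((2*B - A)/(A+B)) δ
      = (4*δ*(A*B) + (1-δ)*A^2 - (1+δ)*B^2)/(3*(A*B)) := by
  have hA' : A ≠ 0 := ne_of_gt hA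
  have hB' : B ≠ 0 := ne_of_gt hB
  have hAB : A + B ≠ 0 := by positivity
  have h2 : (2:ℝ) - (2*B - A)/(A+B) = 3*A/(A+B) := by field_simp; ring
  have h1 : (1:ℝ) + (2*B - A)/(A+B) = 3*B/(A+B) := by field_simp; ring
  unfold Dlt; rw [h2, h1]; field_simp; ring

set_option maxHeartbeats 1000000 in
lemma key (δ p : ℝ) (hδ0 : 0 < δ) (hδ1 : δ < 1) (hp : 0 ≤ p)
    (hs : (1 + 3*δ^2) * (δ + 2*p)^2 ≤ 4*δ^2) :
    W p δ = (-4 - 2*δ^2)/3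
        - (1 - δ^2) * (1 - δ*(δ + 2*p)) / (3 * Real.sqrt ((1 - δ^2) * (1 - (δ + 2*p)^2)))
      ∧ Ineq p δ = (4*δ*Real.sqrt ((1 - δ^2) * (1 - (δ + 2*p)^2)) - 2*(1 - δ^2)*(δ + 2*p))
        / (3 * Real.sqrt ((1 - δ^2) * (1 - (δ + 2*p)^2))) := by
  set s := δ + 2*p with hsdef
  have hs0 : 0 < s := by rw [hsdef]; linarith
  have hsδ : δ ≤ s := by rw [hsdef]; linarith
  have hd2 : 0 < 1 - δ^2 := by nlinarith
  have hs2 : s^2 < 1 := by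
    have h : (1+3*δ^2) * s^2 < (1+3*δ^2) * 1 := by nlinarith
    exact lt_of_mul_lt_mul_left h (by positivity)
  have hs1 : s < 1 := by nlinarith
  have hpδ : p < (1 - δ) / 2 := by
    have := hs1; rw [hsdef] at this; linarith
  set A := Real.sqrt ((1+δ)*(1-s)) with hAdef
  set B := Real.sqrt ((1-δ)*(1+s)) with hBdef
  have hA2 : A^2 = (1+δ)*(1-s) := Real.sq_sqrt (by nlinarith)
  have hB2 : B^2 = (1-δ)*(1+s) := Real.sq_sqrt (by nlinarith)
  have hApos : 0 < A := Real.sqrt_pos.mpr (by nlinarith)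
  have hBpos : 0 < B := Real.sqrt_pos.mpr (by nlinarith)
  have hABpos : 0 < A + B := by linarith
  have hah1 : ah1 p δ = A/2 := by
    unfold ah1
    rw [if_pos hpδ, hAdef, show (1:ℝ) - 2*p - δ = 1 - s from by rw [hsdef]; ring]
    ring
  have hah2 : ah2 p δ = B/2 := by
    unfold ah2
    rw [hBdef, show (1:ℝ) + 2*p + δ = 1 + s from by rw [hsdef]; ring]
    ring
  have hτ : tau2aux p δ = (2*B - A)/(A+B) := by
    unfold tau2aux
    rw [hah1, hah2]
    rw [div_eq_div_iff (by positivity) hABpos.ne']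
    ring
  -- B ≤ 2A
  have hkey1 : s*(5+3*δ) ≤ 3+5*δ := by
    have h1 : (1+3*δ^2)*((s*(5+3*δ))^2) ≤ (1+3*δ^2)*((3+5*δ)^2) := by
      have hint1 := mul_le_mul_of_nonneg_right hs (sq_nonneg (5+3*δ))
      have hint2 : (0:ℝ) ≤ 3*(1-δ)^2*(1+δ)*(13*δ+3) := by positivity
      linarith [hint1, hint2]
    have h2 : (s*(5+3*δ))^2 ≤ (3+5*δ)^2 := le_of_mul_le_mul_left h1 (by positivity)
    nlinarith [h2, mul_pos hs0 (show (0:ℝ) < 5+3*δ by linarith)]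
  have hB2A : B ≤ 2*A := by
    have h : B^2 ≤ (2*A)^2 := by rw [hB2]; nlinarith [hA2]
    nlinarith [h, hApos, hBpos]
  have hmin : tau2star p δ = (2*B - A)/(A+B) := by
    unfold tau2star
    rw [hτ]
    exact min_eq_left (by rw [div_le_one hABpos]; linarith)
  have hR : A * B = Real.sqrt ((1-δ^2)*(1-s^2)) := by
    rw [hAdef, hBdef, ← Real.sqrt_mul (by nlinarith)]
    congr 1; ring
  have hRpos : 0 < A * B := mul_pos hApos hBpos
  have hABne : A * B ≠ 0 := ne_of_gt hRpos
  have hR2 : (A*B)^2 = (1-δ^2)*(1-s^2) := by rw [mul_pow, hA2, hB2]; ring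
  constructor
  · rw [← hR]
    unfold W
    rw [hmin, omega_AB δ A B hApos hBpos, hA2, hB2]
    field_simp
    ring
  · rw [← hR]
    have hΔ : Dlt (tau2star p δ) δ = (4*δ*(A*B) - 2*(1-δ^2)*s)/(3*(A*B)) := by
      rw [hmin, Dlt_AB δ A B hApos hBpos, hA2, hB2]
      congr 1; ring
    have hnum : 0 ≤ 4*δ*(A*B) - 2*(1-δ^2)*s := by
      have h1 : (2*(1-δ^2)*s)^2 ≤ (4*δ*(A*B))^2 := by
        have e : (4*δ*(A*B))^2 = 16*δ^2*((1-δ^2)*(1-s^2)) := by rw [mul_pow, hR2]; ring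
        rw [e]
        nlinarith [mul_le_mul_of_nonneg_left hs hd2.le]
      nlinarith [h1, mul_pos (mul_pos (show (0:ℝ) < 4*δ by linarith) hApos) hBpos,
        mul_nonneg (mul_nonneg (show (0:ℝ) ≤ 2*(1-δ^2) by linarith) hs0.le) (le_refl (0:ℝ))]
    unfold Ineq
    rw [hΔ, abs_of_nonneg (div_nonneg hnum (by positivity))]

lemma lt_of_sq_lt_sq' (x y : ℝ) (hx : 0 ≤ x) (hy : 0 ≤ y) (h : x^2 < y^2) : x < y := by
  nlinarith

set_option maxHeartbeats 1000000 in
/-- Part of Proposition 4 (the welfare–inequality Pareto frontier):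
welfare and inequality are both strictly decreasing in the advisor's partiality
on `[0, p̂(δ)]`. -/
theorem stmt_14 (δ : ℝ) (hδ : δ ∈ Set.Ioo (0 : ℝ) 1) :
    let phat : ℝ := δ * (1 / Real.sqrt (1 + 3 * δ ^ 2) - 1 / 2)
    ∀ p p' : ℝ, 0 ≤ p → p < p' → p' ≤ phat →
      W p' δ < W p δ ∧ Ineq p' δ < Ineq p δ := by
  obtain ⟨hδ0, hδ1⟩ := hδ
  intro phat p p' hp hpp' hp'
  have hphat : p' ≤ δ * (1 / Real.sqrt (1 + 3 * δ ^ 2) - 1 / 2) := hp'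
  set t := Real.sqrt (1 + 3 * δ ^ 2) with htdef
  have ht0 : 0 < t := Real.sqrt_pos.mpr (by positivity)
  have ht2 : t^2 = 1 + 3*δ^2 := Real.sq_sqrt (by positivity)
  have hs'0 : 0 < δ + 2*p' := by linarith
  have hd : δ + 2*p' ≤ 2*δ/t := by
    have h2 : 2*δ/t = 2*(δ*(1/t)) := by ring
    rw [h2]; linarith [hphat]
  have h1 : (δ + 2*p')*t ≤ 2*δ := (le_div_iff₀ ht0).mp hd
  have h2 : ((δ + 2*p')*t)^2 ≤ (2*δ)^2 := by
    nlinarith [h1, mul_nonneg hs'0.le ht0.le]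
  have hs'q : (1 + 3*δ^2) * (δ + 2*p')^2 ≤ 4*δ^2 := by
    have h2' : (δ + 2*p')^2 * t^2 ≤ 4*δ^2 := by nlinarith [h2]
    rw [ht2] at h2'; linarith [h2']
  have hsq : (1 + 3*δ^2) * (δ + 2*p)^2 ≤ 4*δ^2 := by
    have hmono : (δ + 2*p)^2 ≤ (δ + 2*p')^2 := by nlinarith
    have := mul_le_mul_of_nonneg_left hmono (show (0:ℝ) ≤ 1+3*δ^2 by positivity)
    linarith
  obtain ⟨hW, hI⟩ := key δ p hδ0 hδ1 hp hsq
  obtain ⟨hW', hI'⟩ := key δ p' hδ0 hδ1 (by linarith) hs'q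
  set s := δ + 2*p with hsdef
  set s' := δ + 2*p' with hs'def
  set R := Real.sqrt ((1 - δ^2) * (1 - s^2)) with hRdef
  set R' := Real.sqrt ((1 - δ^2) * (1 - s'^2)) with hR'def
  have hd2 : 0 < 1 - δ^2 := by nlinarith
  have hs0 : 0 < s := by rw [hsdef]; linarith
  have hss' : s < s' := by rw [hsdef, hs'def]; linarith
  have hsδ : δ ≤ s := by rw [hsdef]; linarith
  have hs'δ : δ < s' := by rw [hs'def]; linarith
  have hs'2 : s'^2 < 1 := by
    have h : (1+3*δ^2) * s'^2 < (1+3*δ^2) * 1 := by nlinarith [hs'q]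
    exact lt_of_mul_lt_mul_left h (by positivity)
  have hs'1 : s' < 1 := by nlinarith [hs'2, hs'0]
  have hss0 : 0 < s' := by rw [hs'def]; linarith
  have hs1 : s < 1 := by linarith
  have hs2 : s^2 < 1 := by nlinarith
  have hpos1 : 0 < (1 - δ^2) * (1 - s^2) := mul_pos hd2 (by linarith)
  have hpos2 : 0 < (1 - δ^2) * (1 - s'^2) := mul_pos hd2 (by linarith)
  have hRpos : 0 < R := Real.sqrt_pos.mpr hpos1
  have hR'pos : 0 < R' := Real.sqrt_pos.mpr hpos2
  have hR2 : R^2 = (1 - δ^2)*(1 - s^2) := Real.sq_sqrt hpos1.le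
  have hR'2 : R'^2 = (1 - δ^2)*(1 - s'^2) := Real.sq_sqrt hpos2.le
  have hds : δ*s < 1 := by nlinarith [mul_pos (show (0:ℝ) < 1-δ by linarith) hs0]
  have hds' : δ*s' < 1 := by nlinarith [mul_pos (show (0:ℝ) < 1-δ by linarith) hss0]
  constructor
  · rw [hW, hW']
    have hx2 : ((1 - δ*s)*R')^2 < ((1 - δ*s')*R)^2 := by
      have e1 : ((1 - δ*s)*R')^2 = (1 - δ*s)^2*((1 - δ^2)*(1 - s'^2)) := by
        rw [mul_pow, hR'2]
      have e2 : ((1 - δ*s')*R)^2 = (1 - δ*s')^2*((1 - δ^2)*(1 - s^2)) := by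
        rw [mul_pow, hR2]
      rw [e1, e2]
      have hfac : 0 < (1-δ^2)*((s'-s)*((s-δ)*(1-δ*s') + (s'-δ)*(1-δ*s))) := by
        apply mul_pos hd2
        apply mul_pos (by linarith)
        have ha : 0 ≤ (s-δ)*(1-δ*s') := mul_nonneg (by linarith) (by linarith)
        have hb : 0 < (s'-δ)*(1-δ*s) := mul_pos (by linarith) (by linarith)
        linarith
      linarith [hfac]
    have hcross : (1 - δ*s)*R' < (1 - δ*s')*R :=
      lt_of_sq_lt_sq' _ _ (mul_nonneg (by linarith) hR'pos.le)
        (mul_nonneg (by linarith) hRpos.le) hx2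
    have main : (1-δ^2)*(1-δ*s)/(3*R) < (1-δ^2)*(1-δ*s')/(3*R') := by
      rw [div_lt_div_iff₀ (by positivity) (by positivity)]
      linarith [mul_lt_mul_of_pos_left hcross hd2]
    linarith [main]
  · rw [hI, hI']
    have hcross2 : s*R' < s'*R := by
      have hx2 : (s*R')^2 < (s'*R)^2 := by
        rw [mul_pow, mul_pow, hR2, hR'2]
        have hq : (0:ℝ) < s'^2 - s^2 := by
          have := mul_pos (sub_pos.mpr hss') (show (0:ℝ) < s' + s by linarith)
          nlinarith [this]
        linarith [mul_pos hd2 hq]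
      exact lt_of_sq_lt_sq' _ _ (mul_nonneg hs0.le hR'pos.le)
        (mul_nonneg hss0.le hRpos.le) hx2
    rw [div_lt_div_iff₀ (by positivity) (by positivity)]
    linarith [mul_lt_mul_of_pos_left hcross2 hd2]
end
end

section
/- In the discrimination setting, fix δ ∈ (0,1), let p̂(δ) := δ·(1/√(1+3δ²) − 1/2) and let τ̄₂(δ) := max{(1−3δ)/2, 0} be the unchecked politician's allocation to group 2. Then welfare with the equality-restoring advisor strictly exceeds welfare under unchecked discrimination: W(p̂(δ), δ) > ω(τ̄₂(δ), δ). -/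
noncomputable section

private lemma aux1 (δ s : ℝ) (hδ0 : 0 < δ) (hδ1 : δ < 1)
    (hs2 : s ^ 2 = 1 + 3 * δ ^ 2) (hspos : 0 < s) :
    (-5/3 - δ ^ 2) * (3 * δ ^ 2 + s - 1) < 1 - 5 * δ ^ 2 - s - δ ^ 2 * s := by
  have h1 : (0:ℝ) < 1 - δ ^ 2 := by nlinarith
  have hr : (0:ℝ) < 1 + 3/2 * δ ^ 2 - 9/8 * δ ^ 4 := by nlinarith [sq_nonneg δ, sq_nonneg (δ^2)]
  have h6 : (0:ℝ) < δ ^ 6 * (1 - δ ^ 2) := by positivity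
  have hsl : 1 + 3/2 * δ ^ 2 - 9/8 * δ ^ 4 ≤ s := by nlinarith [h6, hr, hspos, hs2, pow_pos hδ0 6]
  nlinarith [pow_pos hδ0 4, hsl]

private lemma aux2 (δ s : ℝ) (hδ0 : 0 < δ) (hδ1 : δ < 1)
    (hs2 : s ^ 2 = 1 + 3 * δ ^ 2) (hspos : 0 < s) :
    (-7/4 - δ ^ 2 / 4) * (3 * δ ^ 2 + s - 1) < 1 - 5 * δ ^ 2 - s - δ ^ 2 * s := by
  have h1 : (0:ℝ) < 1 - δ ^ 2 := by nlinarith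
  have hsd : 1 + δ ^ 2 < s := by
    nlinarith [mul_pos (mul_pos hδ0 hδ0) h1, hspos, hs2, sq_nonneg δ]
  nlinarith [mul_pos h1 (sub_pos.2 hsd)]

set_option maxHeartbeats 1000000 in
/-- Part of Proposition 4: welfare with the equality-restoring
advisor `p̂(δ)` strictly exceeds welfare under unchecked discrimination, where
the unchecked politician allocates `τ̄₂(δ) = max{(1−3δ)/2, 0}` tests to group 2. -/
theorem stmt_15 (δ : ℝ) (hδ : δ ∈ Set.Ioo (0 : ℝ) 1) :
    let phat : ℝ := δ * (1 / Real.sqrt (1 + 3 * δ ^ 2) - 1 / 2)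
    let τbar2 : ℝ := max ((1 - 3 * δ) / 2) 0
    omega τbar2 δ < W phat δ := by
  obtain ⟨hδ0, hδ1⟩ := hδ
  intro phat τbar2
  have hp : phat = δ * (1 / Real.sqrt (1 + 3 * δ ^ 2) - 1 / 2) := rfl
  have hτb : τbar2 = max ((1 - 3 * δ) / 2) 0 := rfl
  clear_value phat τbar2
  set s : ℝ := Real.sqrt (1 + 3 * δ ^ 2) with hsdef
  have hs0 : (0:ℝ) < 1 + 3 * δ ^ 2 := by nlinarith
  have hs2 : s ^ 2 = 1 + 3 * δ ^ 2 := Real.sq_sqrt (le_of_lt hs0)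
  have hspos : 0 < s := Real.sqrt_pos.mpr hs0
  have hs1 : 1 < s := by nlinarith
  have hslt : s < 1 + δ := by nlinarith
  have hs2δ : 2 * δ < s := by nlinarith
  set t : ℝ := (s - 1 + δ) / (2 * δ) with htdef
  have ht0 : 0 < t := by
    apply div_pos (by linarith) (by linarith)
  have ht1 : t < 1 := by
    rw [htdef, div_lt_one (by linarith)]; linarith
  have hcond : phat < (1 - δ) / 2 := by
    rw [hp, show δ * (1 / s - 1 / 2) = δ / s - δ / 2 from by ring]
    have h2 : δ / s < 1 / 2 := by rw [div_lt_iff₀ hspos]; nlinarith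
    linarith
  have hXA : (1 + δ) * (1 - 2 * phat - δ) = (1 + δ) * (s - 2 * δ) / s := by
    rw [hp]; field_simp; ring
  have hXB : (1 - δ) * (1 + 2 * phat + δ) = (1 - δ) * (s + 2 * δ) / s := by
    rw [hp]; field_simp; ring
  have hApos : 0 < (1 + δ) * (s - 2 * δ) / s := by
    apply div_pos (by nlinarith) hspos
  have hBpos : 0 < (1 - δ) * (s + 2 * δ) / s := by
    apply div_pos (by nlinarith) hspos
  have ha1 : ah1 phat δ = 1 / 2 * Real.sqrt ((1 + δ) * (s - 2 * δ) / s) := by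
    rw [ah1, if_pos hcond, hXA]
  have ha2 : ah2 phat δ = 1 / 2 * Real.sqrt ((1 - δ) * (s + 2 * δ) / s) := by
    rw [ah2, hXB]
  set a1 : ℝ := ah1 phat δ with ha1def
  set a2 : ℝ := ah2 phat δ with ha2def
  have ha1pos : 0 < a1 := by
    rw [ha1]; positivity
  have ha2pos : 0 < a2 := by
    rw [ha2]; positivity
  have ha1sq : a1 ^ 2 = (1 + δ) * (s - 2 * δ) / (4 * s) := by
    rw [ha1, mul_pow, Real.sq_sqrt (le_of_lt hApos)]; ring
  have ha2sq : a2 ^ 2 = (1 - δ) * (s + 2 * δ) / (4 * s) := by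
    rw [ha2, mul_pow, Real.sq_sqrt (le_of_lt hBpos)]; ring
  have ht2 : 2 - t = (1 + 3 * δ - s) / (2 * δ) := by
    rw [htdef]; field_simp; ring
  have hs3δ : s < 1 + 3 * δ := by nlinarith
  have ht1' : 1 + t = (s + 3 * δ - 1) / (2 * δ) := by
    rw [htdef]; field_simp; ring
  have hkey2 : (a2 * (2 - t)) ^ 2 = (a1 * (1 + t)) ^ 2 := by
    rw [mul_pow, mul_pow, ha1sq, ha2sq, ht2, ht1']
    rw [div_pow, div_pow, div_mul_div_comm, div_mul_div_comm,
      div_eq_div_iff (by positivity) (by positivity)]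
    linear_combination ((-2*δ*s - 4*δ) * (4*s*(2*δ)^2)) * hs2
  have hkey : a2 * (2 - t) = a1 * (1 + t) := by
    have hx : 0 ≤ a2 * (2 - t) := by
      apply mul_nonneg (le_of_lt ha2pos); linarith
    have hy : 0 ≤ a1 * (1 + t) := by
      apply mul_nonneg (le_of_lt ha1pos); linarith
    exact (sq_eq_sq₀ hx hy).mp hkey2
  have htaux : tau2aux phat δ = t := by
    rw [tau2aux, ← ha1def, ← ha2def, div_eq_iff (by positivity)]
    linear_combination hkey
  have hstar : tau2star phat δ = t := by
    rw [tau2star, htaux, min_eq_left (le_of_lt ht1)]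
  have hden : 0 < 3 * δ ^ 2 + s - 1 := by nlinarith [sq_nonneg δ, hs1]
  have hWt : W phat δ = (1 - 5 * δ ^ 2 - s - δ ^ 2 * s) / (3 * δ ^ 2 + s - 1) := by
    rw [W, hstar, htdef, omega]
    have hd1 : 2 - (s - 1 + δ) / (2 * δ) = (1 + 3 * δ - s) / (2 * δ) := by
      field_simp; ring
    have hd2 : 1 + (s - 1 + δ) / (2 * δ) = (s + 3 * δ - 1) / (2 * δ) := by
      field_simp; ring
    have hD1 : (0:ℝ) < 1 + 3 * δ - s := by nlinarith
    have hD2 : (0:ℝ) < s + 3 * δ - 1 := by nlinarith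
    have hF1 : ((1 + δ) ^ 2 / 2 + (1 + δ) * (1 - (s - 1 + δ) / (2 * δ)))
          / ((1 + 3 * δ - s) / (2 * δ))
        = (δ * (1 + δ) ^ 2 + (1 + δ) * (1 + δ - s)) / (1 + 3 * δ - s) := by
      rw [div_eq_div_iff (by positivity) (ne_of_gt hD1)]
      field_simp; ring
    have hF2 : ((1 - δ) ^ 2 / 2 + (1 - δ) * ((s - 1 + δ) / (2 * δ)))
          / ((s + 3 * δ - 1) / (2 * δ))
        = (δ * (1 - δ) ^ 2 + (1 - δ) * (s - 1 + δ)) / (s + 3 * δ - 1) := by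
      rw [div_eq_div_iff (by positivity) (ne_of_gt hD2)]
      field_simp
    rw [hd1, hd2, hF1, hF2]
    field_simp
    linear_combination (3*δ^4 - 3*δ^2) * hs2
  rw [hWt]
  rcases le_or_gt δ (1/3) with hc | hc
  · have hτ : τbar2 = (1 - 3 * δ) / 2 := by
      rw [hτb, max_eq_left]; linarith
    have hωbar : omega ((1 - 3 * δ) / 2) δ = -5/3 - δ ^ 2 := by
      rw [omega]
      have h1 : 2 - (1 - 3 * δ) / 2 = (3 + 3 * δ) / 2 := by ring
      have h2 : 1 + (1 - 3 * δ) / 2 = (3 - 3 * δ) / 2 := by ring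
      have h3 : (3:ℝ) + 3 * δ ≠ 0 := by linarith
      have h4 : (3:ℝ) - 3 * δ ≠ 0 := by linarith
      rw [h1, h2]
      field_simp
      ring
    rw [hτ, hωbar, lt_div_iff₀ hden]
    exact aux1 δ s hδ0 hδ1 hs2 hspos
  · have hτ : τbar2 = 0 := by
      rw [hτb, max_eq_right]; linarith
    have hωbar : omega 0 δ = -7/4 - δ ^ 2 / 4 := by
      rw [omega]; norm_num; ring
    rw [hτ, hωbar, lt_div_iff₀ hden]
    exact aux2 δ s hδ0 hδ1 hs2 hspos
end
end

section
/- In the discrimination setting, fix δ ∈ (0,1), let p̂(δ) := δ·(1/√(1+3δ²) − 1/2) and let p^aux(δ) ∈ (0, (1−δ)/2) be the unique partiality level with τ₂*(p^aux(δ), δ) = 1. Then p̂(δ) < p^aux(δ); the functions p ↦ W(p,δ) and p ↦ I(p,δ) are continuous on [0,1); on the interval (p̂(δ), p^aux(δ)) welfare W(·,δ) is strictly decreasing while inequality I(·,δ) is strictly increasing; and both W(·,δ) and I(·,δ) are constant on [p^aux(δ), 1). -/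
noncomputable section

/-! ### Auxiliary lemmas -/

lemma ah1_eq {δ : ℝ} (hδ : -1 < δ) (p : ℝ) :
    ah1 p δ = (1 / 2) * Real.sqrt ((1 + δ) * (1 - 2 * p - δ)) := by
  unfold ah1
  split_ifs with h
  · rfl
  · push_neg at h
    rw [Real.sqrt_eq_zero_of_nonpos (by nlinarith)]
    ring

lemma ah1_sq {δ p : ℝ} (hδ0 : -1 < δ) (hp : p < (1 - δ) / 2) :
    4 * (ah1 p δ) ^ 2 = (1 + δ) * (1 - 2 * p - δ) := by
  rw [ah1, if_pos hp, mul_pow, Real.sq_sqrt (by nlinarith)]; ring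

lemma ah2_sq {δ p : ℝ} (hδ1 : δ < 1) (hδ0 : -1 < δ) (hp : 0 ≤ p) :
    4 * (ah2 p δ) ^ 2 = (1 - δ) * (1 + 2 * p + δ) := by
  rw [ah2, mul_pow, Real.sq_sqrt (by nlinarith)]; ring

lemma ah1_pos {δ p : ℝ} (hδ0 : -1 < δ) (hp : p < (1 - δ) / 2) : 0 < ah1 p δ := by
  rw [ah1, if_pos hp]
  have := Real.sqrt_pos.mpr (show 0 < (1 + δ) * (1 - 2 * p - δ) by nlinarith)
  linarith

lemma ah2_pos {δ p : ℝ} (hδ1 : δ < 1) (hδ0 : -1 < δ) (hp : 0 ≤ p) : 0 < ah2 p δ := by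
  rw [ah2]
  have := Real.sqrt_pos.mpr (show 0 < (1 - δ) * (1 + 2 * p + δ) by nlinarith)
  linarith

lemma ah1_nonneg (p δ : ℝ) : 0 ≤ ah1 p δ := by
  unfold ah1; split_ifs
  · positivity
  · exact le_refl 0

/-- Strict monotonicity of `τ₂^aux` in `p` on `[0, (1−δ)/2)`. -/
lemma tau2aux_mono {δ x y : ℝ} (hδ1 : δ < 1) (hδ0 : 0 < δ) (hx : 0 ≤ x) (hxy : x < y)
    (hy : y < (1 - δ) / 2) : tau2aux x δ < tau2aux y δ := by
  have hδ0' : (-1:ℝ) < δ := by linarith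
  have hx2 : x < (1 - δ) / 2 := by linarith
  have hy0 : 0 ≤ y := by linarith
  have a1x := ah1_pos hδ0' hx2
  have a1y := ah1_pos hδ0' hy
  have a2x := ah2_pos hδ1 hδ0' hx
  have a2y := ah2_pos hδ1 hδ0' hy0
  have s1x := ah1_sq hδ0' hx2
  have s1y := ah1_sq hδ0' hy
  have s2x := ah2_sq hδ1 hδ0' hx
  have s2y := ah2_sq hδ1 hδ0' hy0
  rw [tau2aux, tau2aux, div_lt_div_iff₀ (by linarith) (by linarith)]
  have key : ah2 x δ * ah1 y δ < ah2 y δ * ah1 x δ := by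
    have hsq : (ah2 x δ * ah1 y δ) ^ 2 < (ah2 y δ * ah1 x δ) ^ 2 := by
      have e1 : 16 * (ah2 x δ * ah1 y δ) ^ 2
          = ((1 - δ) * (1 + 2 * x + δ)) * ((1 + δ) * (1 - 2 * y - δ)) := by
        nlinarith [s2x, s1y]
      have e2 : 16 * (ah2 y δ * ah1 x δ) ^ 2
          = ((1 - δ) * (1 + 2 * y + δ)) * ((1 + δ) * (1 - 2 * x - δ)) := by
        nlinarith [s2y, s1x]
      nlinarith [e1, e2, mul_pos (mul_pos (show (0:ℝ) < 1 - δ by linarith)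
        (show (0:ℝ) < 1 + δ by linarith)) (show (0:ℝ) < y - x by linarith)]
    exact lt_of_pow_lt_pow_left₀ 2 (by positivity) hsq
  nlinarith [key]

lemma tau2aux_lt_one {δ p : ℝ} (hδ1 : δ < 1) (hδ0 : 0 < δ) (hp0 : 0 ≤ p)
    (hp : p < (1 - δ) / 2)
    (hlin : p * (10 + 6 * δ) < 3 * (1 - δ ^ 2)) : tau2aux p δ < 1 := by
  have hδ0' : (-1:ℝ) < δ := by linarith
  have a1 := ah1_pos hδ0' hp
  have a2 := ah2_pos hδ1 hδ0' hp0
  have s1 := ah1_sq hδ0' hp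
  have s2 := ah2_sq hδ1 hδ0' hp0
  rw [tau2aux, div_lt_one (by linarith)]
  have key : ah2 p δ < 2 * ah1 p δ := by
    have hsq : (ah2 p δ) ^ 2 < (2 * ah1 p δ) ^ 2 := by nlinarith
    exact lt_of_pow_lt_pow_left₀ 2 (by positivity) hsq
  linarith

lemma tau2aux_ge_one {δ p : ℝ} (hδ1 : δ < 1) (hδ0 : 0 < δ) (hp0 : 0 ≤ p)
    (hp : p < (1 - δ) / 2)
    (hlin : 3 * (1 - δ ^ 2) ≤ p * (10 + 6 * δ)) : 1 ≤ tau2aux p δ := by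
  have hδ0' : (-1:ℝ) < δ := by linarith
  have a1 := ah1_pos hδ0' hp
  have a2 := ah2_pos hδ1 hδ0' hp0
  have s1 := ah1_sq hδ0' hp
  have s2 := ah2_sq hδ1 hδ0' hp0
  rw [tau2aux, le_div_iff₀ (by linarith), one_mul]
  have key : 2 * ah1 p δ ≤ ah2 p δ := by
    have hsq : (2 * ah1 p δ) ^ 2 ≤ (ah2 p δ) ^ 2 := by nlinarith
    exact le_of_pow_le_pow_left₀ two_ne_zero (by positivity) hsq
  linarith

lemma tau2aux_gt_half {δ p : ℝ} (hδ1 : δ < 1) (hδ0 : 0 < δ) (hp0 : 0 < p)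
    (hp : p < (1 - δ) / 2) : 1 / 2 < tau2aux p δ := by
  have hδ0' : (-1:ℝ) < δ := by linarith
  have a1 := ah1_pos hδ0' hp
  have a2 := ah2_pos hδ1 hδ0' hp0.le
  have s1 := ah1_sq hδ0' hp
  have s2 := ah2_sq hδ1 hδ0' hp0.le
  rw [tau2aux, lt_div_iff₀ (by linarith)]
  have key : ah1 p δ < ah2 p δ := by
    have hsq : (ah1 p δ) ^ 2 < (ah2 p δ) ^ 2 := by nlinarith
    exact lt_of_pow_lt_pow_left₀ 2 (by positivity) hsq
  linarith

/-- The linear equation characterizing `p^aux`. -/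
lemma paux_lin {δ p : ℝ} (hδ1 : δ < 1) (hδ0 : 0 < δ) (hp0 : 0 < p)
    (hp : p < (1 - δ) / 2)
    (h1 : tau2aux p δ = 1) : p * (10 + 6 * δ) = 3 * (1 - δ ^ 2) := by
  have hδ0' : (-1:ℝ) < δ := by linarith
  have a1 := ah1_pos hδ0' hp
  have a2 := ah2_pos hδ1 hδ0' hp0.le
  have s1 := ah1_sq hδ0' hp
  have s2 := ah2_sq hδ1 hδ0' hp0.le
  rw [tau2aux, div_eq_one_iff_eq (by linarith)] at h1
  have he : ah2 p δ = 2 * ah1 p δ := by linarith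
  nlinarith [he, s1, s2]

/-- Closed form of welfare. -/
lemma omega_eq {δ τ : ℝ} (h1 : τ < 2) (h2 : -1 < τ) :
    omega τ δ = -1 - δ ^ 2 - (3 * (1 - δ ^ 2) / 2) / ((2 - τ) * (1 + τ)) := by
  have hn1 : 2 - τ ≠ 0 := by linarith
  have hn2 : 1 + τ ≠ 0 := by linarith
  rw [omega]; field_simp; ring

/-- Welfare is strictly decreasing in the allocation on `(1/2, 1]`. -/
lemma omega_anti {δ a b : ℝ} (hδ1 : δ < 1) (hδ0 : 0 < δ) (ha : 1 / 2 < a)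
    (hab : a < b) (hb : b ≤ 1) : omega b δ < omega a δ := by
  rw [omega_eq (by linarith) (by linarith), omega_eq (by linarith) (by linarith)]
  have hga : 0 < (2 - a) * (1 + a) := by nlinarith
  have hgb : 0 < (2 - b) * (1 + b) := by nlinarith
  have hgg : (2 - b) * (1 + b) < (2 - a) * (1 + a) := by nlinarith
  have hk : 0 < 3 * (1 - δ ^ 2) / 2 := by nlinarith
  have := div_lt_div_of_pos_left hk hgb hgg
  linarith

/-- `Δ` is strictly decreasing in the allocation on `(0, 1)`. -/
lemma dlt_anti {δ a b : ℝ} (hδ1 : δ < 1) (hδ0 : 0 < δ) (ha : 0 < a) (hab : a < b)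
    (hb : b < 1) : Dlt b δ < Dlt a δ := by
  have h1 : (1 + δ) * (1 - b) / (2 - b) < (1 + δ) * (1 - a) / (2 - a) := by
    rw [div_lt_div_iff₀ (by linarith) (by linarith)]; nlinarith
  have h2 : (1 - δ) * a / (1 + a) < (1 - δ) * b / (1 + b) := by
    rw [div_lt_div_iff₀ (by linarith) (by linarith)]; nlinarith
  rw [Dlt, Dlt]; linarith

lemma dlt_neg {δ τ : ℝ} (h2 : -1 < τ) (h1 : τ < 2)
    (key : (1 + δ) * (1 - τ) * (1 + τ) < (1 - δ) * τ * (2 - τ)) : Dlt τ δ < 0 := by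
  rw [Dlt, sub_neg, div_lt_div_iff₀ (by linarith) (by linarith)]
  nlinarith [key]

lemma key8_lemma {δ p a1 a2 : ℝ} (hδ1 : δ < 1) (hδ0 : 0 < δ)
    (ha1 : 0 < a1) (ha2 : 0 < a2)
    (s1 : 4 * a1 ^ 2 = (1 + δ) * (1 - 2 * p - δ))
    (s2 : 4 * a2 ^ 2 = (1 - δ) * (1 + 2 * p + δ))
    (hp0 : 0 < p)
    (hphat : δ * (1 / Real.sqrt (1 + 3 * δ ^ 2) - 1 / 2) < p) :
    8 * δ * (a1 * a2) < (1 - δ ^ 2) * (2 * p + δ) := by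
  set r := Real.sqrt (1 + 3 * δ ^ 2) with hrdef
  have hr0 : 0 < r := Real.sqrt_pos.mpr (by nlinarith)
  have hr2 : r ^ 2 = 1 + 3 * δ ^ 2 := Real.sq_sqrt (by nlinarith)
  have hδinv : δ * (1 / r) * r = δ := by field_simp
  have hprod := mul_lt_mul_of_pos_right hphat hr0
  have hu : 2 * δ < (2 * p + δ) * r := by nlinarith [hprod, hδinv]
  have hu0 : 0 < 2 * p + δ := by linarith
  have husq : 4 * δ ^ 2 < (2 * p + δ) ^ 2 * (1 + 3 * δ ^ 2) := by
    nlinarith [hu, hr0, hu0, hr2]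
  have h9 : 0 < (1 - δ ^ 2) * ((2 * p + δ) ^ 2 * (1 + 3 * δ ^ 2) - 4 * δ ^ 2) :=
    mul_pos (by nlinarith) (by linarith)
  have hAB : 16 * (a1 * a2) ^ 2
      = ((1 + δ) * (1 - 2 * p - δ)) * ((1 - δ) * (1 + 2 * p + δ)) := by
    nlinarith [s1, s2]
  have e5 : 64 * δ ^ 2 * (a1 * a2) ^ 2
      = 4 * δ ^ 2 * (((1 + δ) * (1 - 2 * p - δ)) * ((1 - δ) * (1 + 2 * p + δ))) := by
    linear_combination (4 * δ ^ 2) * hAB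
  have hsq : (8 * δ * (a1 * a2)) ^ 2 < ((1 - δ ^ 2) * (2 * p + δ)) ^ 2 := by
    linarith [e5, h9]
  have hR0 : 0 ≤ (1 - δ ^ 2) * (2 * p + δ) := by nlinarith
  exact lt_of_pow_lt_pow_left₀ 2 hR0 hsq

lemma dlt_frac_neg {δ p a1 a2 : ℝ}
    (ha1 : 0 < a1) (ha2 : 0 < a2)
    (key8 : 8 * δ * (a1 * a2) < (1 - δ ^ 2) * (2 * p + δ))
    (s1 : 4 * a1 ^ 2 = (1 + δ) * (1 - 2 * p - δ))
    (s2 : 4 * a2 ^ 2 = (1 - δ) * (1 + 2 * p + δ)) :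
    Dlt ((2 * a2 - a1) / (a1 + a2)) δ < 0 := by
  have hd : 0 < a1 + a2 := by linarith
  have hτ : (2 * a2 - a1) / (a1 + a2) * (a1 + a2) = 2 * a2 - a1 :=
    div_mul_cancel₀ _ (by linarith)
  set τ := (2 * a2 - a1) / (a1 + a2) with hτdef
  have hτ1 : -1 < τ := by rw [hτdef, lt_div_iff₀ hd]; linarith
  have hτ2 : τ < 2 := by rw [hτdef, div_lt_iff₀ hd]; linarith
  apply dlt_neg hτ1 hτ2
  have hd2 : (0:ℝ) < (a1 + a2) ^ 2 := by positivity
  rw [← mul_lt_mul_iff_left₀ hd2]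
  have e1 : (1 + δ) * (1 - τ) * (1 + τ) * (a1 + a2) ^ 2
      = (1 + δ) * (2 * a1 - a2) * (3 * a2) := by
    linear_combination (-(1 + δ) * (τ * (a1 + a2) + (2 * a2 - a1))) * hτ
  have e2 : (1 - δ) * τ * (2 - τ) * (a1 + a2) ^ 2
      = (1 - δ) * (2 * a2 - a1) * (3 * a1) := by
    linear_combination ((1 - δ) * (2 * (a1 + a2) - τ * (a1 + a2) - (2 * a2 - a1))) * hτ
  rw [e1, e2]
  have e3 : 4 * ((1 + δ) * a2 ^ 2) = (1 - δ ^ 2) * (1 + 2 * p + δ) := by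
    linear_combination (1 + δ) * s2
  have e4 : 4 * ((1 - δ) * a1 ^ 2) = (1 - δ ^ 2) * (1 - 2 * p - δ) := by
    linear_combination (1 - δ) * s1
  nlinarith [key8, e3, e4]

lemma phat_pos {δ : ℝ} (hδ1 : δ < 1) (hδ0 : 0 < δ) :
    0 < δ * (1 / Real.sqrt (1 + 3 * δ ^ 2) - 1 / 2) := by
  set r := Real.sqrt (1 + 3 * δ ^ 2) with hr
  have hr0 : 0 < r := Real.sqrt_pos.mpr (by nlinarith)
  have hr2 : r ^ 2 = 1 + 3 * δ ^ 2 := Real.sq_sqrt (by nlinarith)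
  have hrlt : r < 2 := by nlinarith
  have h12 : (1:ℝ) / 2 < 1 / r := by
    rw [div_lt_div_iff₀ (by linarith) (by linarith)]; linarith
  have hpos : 0 < 1 / r - 1 / 2 := by linarith
  positivity

lemma phat_lt_paux {δ paux : ℝ} (hδ1 : δ < 1) (hδ0 : 0 < δ)
    (hpx : paux * (10 + 6 * δ) = 3 * (1 - δ ^ 2)) :
    δ * (1 / Real.sqrt (1 + 3 * δ ^ 2) - 1 / 2) < paux := by
  set r := Real.sqrt (1 + 3 * δ ^ 2) with hrdef
  have hr0 : 0 < r := Real.sqrt_pos.mpr (by nlinarith)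
  have hr2 : r ^ 2 = 1 + 3 * δ ^ 2 := Real.sq_sqrt (by nlinarith)
  have hv2 : (r * (3 + 5 * δ)) ^ 2 - (2 * δ * (5 + 3 * δ)) ^ 2
      = 3 * (1 - δ) ^ 2 * (1 + δ) * (3 + 13 * δ) := by
    linear_combination ((3 + 5 * δ) ^ 2) * hr2
  have hppos : 0 < 3 * (1 - δ) ^ 2 * (1 + δ) * (3 + 13 * δ) := by
    nlinarith [sq_nonneg (1 - δ)]
  have hsum : 0 < r * (3 + 5 * δ) + 2 * δ * (5 + 3 * δ) := by nlinarith
  have key : 2 * δ * (5 + 3 * δ) < r * (3 + 5 * δ) := by nlinarith [hv2, hppos, hsum]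
  have hinv : (1 / r) * r = 1 := by field_simp
  rw [← mul_lt_mul_iff_left₀ (show (0:ℝ) < 2 * r by linarith)]
  have e : δ * (1 / r - 1 / 2) * (2 * r) = 2 * δ - δ * r := by
    linear_combination (2 * δ) * hinv
  rw [e, ← mul_lt_mul_iff_left₀ (show (0:ℝ) < 10 + 6 * δ by linarith)]
  have e2 : paux * (2 * r) * (10 + 6 * δ) = 6 * (1 - δ ^ 2) * r := by
    linear_combination (2 * r) * hpx
  rw [e2]
  nlinarith [key]

/-! ### Continuity lemmas -/

lemma tau2star_gt {δ : ℝ} (hδ1 : δ < 1) (hδ0 : 0 < δ) {p : ℝ} (hp : 0 ≤ p) :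
    -1 < tau2star p δ := by
  have hδ' : (-1:ℝ) < δ := by linarith
  have a2 := ah2_pos hδ1 hδ' hp
  have a1 := ah1_nonneg p δ
  have : (-1:ℝ) < tau2aux p δ := by
    rw [tau2aux, lt_div_iff₀ (by linarith)]; linarith
  exact lt_min this (by norm_num)

lemma tau2star_le {δ : ℝ} (p : ℝ) : tau2star p δ ≤ 1 := min_le_right _ _

lemma hc_ah1 {δ : ℝ} (hδ : -1 < δ) : Continuous fun p : ℝ => ah1 p δ := by
  have : (fun p : ℝ => ah1 p δ)
      = fun p => (1 / 2) * Real.sqrt ((1 + δ) * (1 - 2 * p - δ)) :=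
    funext (ah1_eq hδ)
  rw [this]
  fun_prop

lemma hc_ah2 {δ : ℝ} : Continuous fun p : ℝ => ah2 p δ := by
  unfold ah2; fun_prop

lemma hts_cont {δ : ℝ} (hδ1 : δ < 1) (hδ0 : 0 < δ) :
    ContinuousOn (fun p => tau2star p δ) (Set.Ico (0:ℝ) 1) := by
  have hδ' : (-1:ℝ) < δ := by linarith
  have hnum : Continuous fun p : ℝ => 2 * ah2 p δ - ah1 p δ :=
    (continuous_const.mul hc_ah2).sub (hc_ah1 hδ')
  have hden : Continuous fun p : ℝ => ah1 p δ + ah2 p δ := (hc_ah1 hδ').add hc_ah2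
  have hne : ∀ p ∈ Set.Ico (0:ℝ) 1, ah1 p δ + ah2 p δ ≠ 0 := by
    intro p hp
    have := ah2_pos hδ1 hδ' hp.1
    have := ah1_nonneg p δ
    exact ne_of_gt (by linarith)
  have hdiv : ContinuousOn (fun p => tau2aux p δ) (Set.Ico (0:ℝ) 1) :=
    ContinuousOn.div hnum.continuousOn hden.continuousOn hne
  exact (continuous_id.min continuous_const).comp_continuousOn hdiv

lemma hW_cont {δ : ℝ} (hδ1 : δ < 1) (hδ0 : 0 < δ) :
    ContinuousOn (fun p => W p δ) (Set.Ico (0:ℝ) 1) := by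
  have hts := hts_cont hδ1 hδ0
  have h2ne : ∀ p ∈ Set.Ico (0:ℝ) 1, (2 - tau2star p δ) ≠ 0 := fun p hp =>
    ne_of_gt (by linarith [tau2star_le (δ := δ) p])
  have h1ne : ∀ p ∈ Set.Ico (0:ℝ) 1, (1 + tau2star p δ) ≠ 0 := fun p hp =>
    ne_of_gt (by linarith [tau2star_gt hδ1 hδ0 hp.1])
  unfold W omega
  exact (continuousOn_const.add
    ((continuousOn_const.add (continuousOn_const.mul (continuousOn_const.sub hts))).div
      (continuousOn_const.sub hts) h2ne)).add
    ((continuousOn_const.add (continuousOn_const.mul hts)).div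
      (continuousOn_const.add hts) h1ne)

lemma hI_cont {δ : ℝ} (hδ1 : δ < 1) (hδ0 : 0 < δ) :
    ContinuousOn (fun p => Ineq p δ) (Set.Ico (0:ℝ) 1) := by
  have hts := hts_cont hδ1 hδ0
  have h2ne : ∀ p ∈ Set.Ico (0:ℝ) 1, (2 - tau2star p δ) ≠ 0 := fun p hp =>
    ne_of_gt (by linarith [tau2star_le (δ := δ) p])
  have h1ne : ∀ p ∈ Set.Ico (0:ℝ) 1, (1 + tau2star p δ) ≠ 0 := fun p hp =>
    ne_of_gt (by linarith [tau2star_gt hδ1 hδ0 hp.1])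
  unfold Ineq Dlt
  exact (((continuousOn_const.mul (continuousOn_const.sub hts)).div
      (continuousOn_const.sub hts) h2ne).sub
    ((continuousOn_const.mul hts).div (continuousOn_const.add hts) h1ne)).abs

/-! ### Main theorem -/

/-- Lemma 7 of the paper.  Here `paux` is the threshold partiality
level `p^aux(δ) ∈ (0, (1−δ)/2)`, i.e. the unique level at which the advisor's
allocation to group 2 reaches the full budget (`τ₂^aux(p^aux, δ) = 1`, so that
`τ₂*(p^aux, δ) = 1`).  Then `p̂(δ) < p^aux(δ)`; welfare and inequality are
continuous in `p` on `[0,1)`; on `(p̂(δ), p^aux(δ))` welfare is strictly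
decreasing while inequality is strictly increasing; and both are constant on
`[p^aux(δ), 1)`. -/
theorem stmt_16 (δ paux : ℝ) (hδ : δ ∈ Set.Ioo (0 : ℝ) 1)
    (hpaux : paux ∈ Set.Ioo (0 : ℝ) ((1 - δ) / 2))
    (hpaux1 : tau2aux paux δ = 1)
    (hpauxu : ∀ q ∈ Set.Ioo (0 : ℝ) ((1 - δ) / 2), tau2aux q δ = 1 → q = paux) :
    let phat : ℝ := δ * (1 / Real.sqrt (1 + 3 * δ ^ 2) - 1 / 2)
    phat < paux ∧
    ContinuousOn (fun p => W p δ) (Set.Ico (0 : ℝ) 1) ∧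
    ContinuousOn (fun p => Ineq p δ) (Set.Ico (0 : ℝ) 1) ∧
    StrictAntiOn (fun p => W p δ) (Set.Ioo phat paux) ∧
    StrictMonoOn (fun p => Ineq p δ) (Set.Ioo phat paux) ∧
    (∀ p ∈ Set.Ico paux (1 : ℝ), W p δ = W paux δ ∧ Ineq p δ = Ineq paux δ) := by
  obtain ⟨hδ0, hδ1⟩ := hδ
  obtain ⟨hpaux0, hpaux2⟩ := hpaux
  have hδ' : (-1:ℝ) < δ := by linarith
  intro phat
  have hphat_eq : phat = δ * (1 / Real.sqrt (1 + 3 * δ ^ 2) - 1 / 2) := rfl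
  have hpx : paux * (10 + 6 * δ) = 3 * (1 - δ ^ 2) :=
    paux_lin hδ1 hδ0 hpaux0 hpaux2 hpaux1
  have hphat0 : 0 < phat := phat_pos hδ1 hδ0
  -- facts used for the two monotonicity statements
  have hfacts : ∀ z ∈ Set.Ioo phat paux,
      tau2star z δ = tau2aux z δ ∧ 1 / 2 < tau2aux z δ ∧ tau2aux z δ < 1 := by
    intro z hz
    have hz0 : 0 < z := lt_trans hphat0 hz.1
    have hz2 : z < (1 - δ) / 2 := lt_trans hz.2 hpaux2
    have hlt : tau2aux z δ < 1 := by
      apply tau2aux_lt_one hδ1 hδ0 hz0.le hz2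
      nlinarith [hz.2, hpx]
    exact ⟨min_eq_left hlt.le, tau2aux_gt_half hδ1 hδ0 hz0 hz2, hlt⟩
  -- constancy on [paux, 1)
  have hts1 : ∀ p, paux ≤ p → tau2star p δ = 1 := by
    intro p hp
    have hp0 : (0:ℝ) ≤ p := le_trans hpaux0.le hp
    rw [tau2star]
    by_cases hcase : p < (1 - δ) / 2
    · exact min_eq_right (tau2aux_ge_one hδ1 hδ0 hp0 hcase (by nlinarith [hpx]))
    · have h0 : ah1 p δ = 0 := by rw [ah1, if_neg hcase]
      have a2 := ah2_pos hδ1 hδ' hp0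
      have : tau2aux p δ = 2 := by
        rw [tau2aux, h0, sub_zero, zero_add, mul_div_assoc, div_self (ne_of_gt a2), mul_one]
      rw [this]
      exact min_eq_right (by norm_num)
  refine ⟨phat_lt_paux hδ1 hδ0 hpx, hW_cont hδ1 hδ0, hI_cont hδ1 hδ0, ?_, ?_, ?_⟩
  · -- welfare strictly decreasing
    intro x hx y hy hxy
    obtain ⟨hsx, hhx, hlx⟩ := hfacts x hx
    obtain ⟨hsy, hhy, hly⟩ := hfacts y hy
    have hx0 : 0 < x := lt_trans hphat0 hx.1
    have hy2 : y < (1 - δ) / 2 := lt_trans hy.2 hpaux2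
    have hmono : tau2aux x δ < tau2aux y δ := tau2aux_mono hδ1 hδ0 hx0.le hxy hy2
    show W y δ < W x δ
    rw [W, W, hsx, hsy]
    exact omega_anti hδ1 hδ0 hhx hmono hly.le
  · -- inequality strictly increasing
    intro x hx y hy hxy
    obtain ⟨hsx, hhx, hlx⟩ := hfacts x hx
    obtain ⟨hsy, hhy, hly⟩ := hfacts y hy
    have hx0 : 0 < x := lt_trans hphat0 hx.1
    have hx2 : x < (1 - δ) / 2 := lt_trans hx.2 hpaux2
    have hy2 : y < (1 - δ) / 2 := lt_trans hy.2 hpaux2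
    have hmono : tau2aux x δ < tau2aux y δ := tau2aux_mono hδ1 hδ0 hx0.le hxy hy2
    have hdx : Dlt (tau2aux x δ) δ < 0 := by
      have a1 := ah1_pos hδ' hx2
      have a2 := ah2_pos hδ1 hδ' hx0.le
      have s1 := ah1_sq (δ := δ) (p := x) hδ' hx2
      have s2 := ah2_sq (δ := δ) (p := x) hδ1 hδ' hx0.le
      have key8 := key8_lemma hδ1 hδ0 a1 a2 s1 s2 hx0 (hphat_eq ▸ hx.1)
      rw [tau2aux]
      exact dlt_frac_neg a1 a2 key8 s1 s2
    have hanti : Dlt (tau2aux y δ) δ < Dlt (tau2aux x δ) δ :=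
      dlt_anti hδ1 hδ0 (by linarith) hmono hly
    show Ineq x δ < Ineq y δ
    rw [Ineq, Ineq, hsx, hsy, abs_of_neg hdx, abs_of_neg (by linarith)]
    linarith
  · -- constancy on [paux, 1)
    intro p hp
    have h1 : tau2star p δ = 1 := hts1 p hp.1
    have h2 : tau2star paux δ = 1 := hts1 paux le_rfl
    constructor
    · rw [W, W, h1, h2]
    · rw [Ineq, Ineq, h1, h2]
end
end

section
/- For every δ ∈ (0,1), the unchecked politician's test allocation to group 2 is farther from the equal split than the equality-restoring allocation: |τ̄₂(δ) − 1/2| > |τ̂₂(δ) − 1/2|, where τ̄₂(δ) := max{(1−3δ)/2, 0} and τ̂₂(δ) := (−(1−δ) + √(1+3δ²))/(2δ). -/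
noncomputable section

/-- Lemma 8 of the paper.  The unchecked politician's allocation
to group 2, `τ̄₂(δ) = max{(1−3δ)/2, 0}`, is farther from the equal split `1/2`
than the equality-restoring allocation `τ̂₂(δ) = (−(1−δ) + √(1+3δ²))/(2δ)`. -/
theorem stmt_17 (δ : ℝ) (hδ : δ ∈ Set.Ioo (0 : ℝ) 1) :
    |max ((1 - 3 * δ) / 2) 0 - 1 / 2| >
      |(-(1 - δ) + Real.sqrt (1 + 3 * δ ^ 2)) / (2 * δ) - 1 / 2| := by
  obtain ⟨h0, h1⟩ := hδ
  set s := Real.sqrt (1 + 3 * δ ^ 2) with hs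
  have hs1 : 1 < s := by
    rw [hs, show (1:ℝ) + 3 * δ ^ 2 = 1 + 3 * δ ^ 2 from rfl]
    nlinarith [Real.sq_sqrt (show (0:ℝ) ≤ 1 + 3 * δ ^ 2 by positivity),
      Real.sqrt_nonneg (1 + 3 * δ ^ 2)]
  have hsδ : s < 1 + δ := by
    rw [hs]
    have := Real.sqrt_lt' (x := 1 + 3 * δ ^ 2) (y := 1 + δ) (by linarith)
    rw [this]; nlinarith
  have hsq : s < 1 + 3 * δ ^ 2 := by
    rw [hs]
    have := Real.sqrt_lt' (x := 1 + 3 * δ ^ 2) (y := 1 + 3 * δ ^ 2) (by nlinarith)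
    rw [this]; nlinarith
  have hrw : (-(1 - δ) + s) / (2 * δ) - 1 / 2 = (s - 1) / (2 * δ) := by
    field_simp; ring
  have habs : |(-(1 - δ) + s) / (2 * δ) - 1 / 2| = (s - 1) / (2 * δ) := by
    rw [hrw, abs_of_nonneg]
    apply div_nonneg (by linarith) (by linarith)
  rw [habs]
  rcases le_or_gt ((1 - 3 * δ) / 2) 0 with hc | hc
  · rw [max_eq_right hc]
    have : (s - 1) / (2 * δ) < 1 / 2 := by
      rw [div_lt_iff₀ (by linarith)]; linarith
    rw [abs_of_nonpos (by norm_num)]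
    linarith
  · rw [max_eq_left hc.le]
    have : (s - 1) / (2 * δ) < 3 * δ / 2 := by
      rw [div_lt_iff₀ (by linarith)]; nlinarith
    rw [abs_of_nonpos (by linarith)]
    linarith
end
end

section
/- In the changing-preferences setting with initial weights α₁, α₂ > 0, change factor c > 0 with c ≠ 1, and change probability p ∈ (0,1), the following are equivalent: (i) for every budget T > 0, every maximizer τ of the sophisticated agent's reduced objective G_s(τ) := −α₁²/(1+τ₁) − α₂²(1−p+pc(2−c))/(1+τ₂) over {τ ∈ ℝ² : τ₁, τ₂ ≥ 0, τ₁+τ₂ ≤ T} satisfies τ₂ = 0 (strategic ignorance about attribute 2); (ii) √p · (c − 1) ≥ 1. -/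
noncomputable section

/-- Proposition 6 of the paper (strategic ignorance in the
changing-preferences setting).  The sophisticated agent's reduced objective is
`G_s(τ) = −α₁²/(1+τ₁) − α₂²(1−p+pc(2−c))/(1+τ₂)`.  The sophisticate avoids
learning about attribute 2 for every budget `T > 0` iff `√p (c−1) ≥ 1`. -/
theorem stmt_18 (a1 a2 c p : ℝ)
    (ha1 : 0 < a1) (ha2 : 0 < a2) (hc : 0 < c) (hc1 : c ≠ 1)
    (hp : p ∈ Set.Ioo (0 : ℝ) 1) :
    let Gs : ℝ × ℝ → ℝ := fun τ =>
      -(a1 ^ 2) / (1 + τ.1) - a2 ^ 2 * (1 - p + p * c * (2 - c)) / (1 + τ.2)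
    ((∀ T : ℝ, 0 < T →
        ∀ τ ∈ {τ : ℝ × ℝ | 0 ≤ τ.1 ∧ 0 ≤ τ.2 ∧ τ.1 + τ.2 ≤ T},
          (∀ τ' ∈ {τ : ℝ × ℝ | 0 ≤ τ.1 ∧ 0 ≤ τ.2 ∧ τ.1 + τ.2 ≤ T}, Gs τ' ≤ Gs τ) →
          τ.2 = 0)
      ↔ 1 ≤ Real.sqrt p * (c - 1)) := by
  intro Gs
  obtain ⟨hp0, hp1⟩ := hp
  have hsq : Real.sqrt p ^ 2 = p := Real.sq_sqrt hp0.le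
  have hsnn : 0 ≤ Real.sqrt p := Real.sqrt_nonneg p
  constructor
  · -- (i) → condition ; by contrapositive
    intro h
    by_contra hn
    push_neg at hn
    -- then K > 0
    have hK : 0 < 1 - p + p * c * (2 - c) := by
      rcases le_or_gt c 1 with hcle | hcgt
      · nlinarith [sq_nonneg (c - 1)]
      · have hx0 : 0 ≤ Real.sqrt p * (c - 1) :=
          mul_nonneg hsnn (by linarith)
        nlinarith [mul_nonneg hx0 hx0, mul_le_mul_of_nonneg_left hn.le hx0, hn]
    set B := a2 ^ 2 * (1 - p + p * c * (2 - c)) with hBdef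
    have hBpos : 0 < B := by positivity
    set β := Real.sqrt B with hβdef
    have hβ : 0 < β := Real.sqrt_pos.mpr hBpos
    have hβ2 : β ^ 2 = B := Real.sq_sqrt hBpos.le
    set T := a1 / β + β / a1 with hTdef
    have hTpos : 0 < T := by positivity
    have hmem : (a1 / β, β / a1) ∈ {τ : ℝ × ℝ | 0 ≤ τ.1 ∧ 0 ≤ τ.2 ∧ τ.1 + τ.2 ≤ T} := by
      refine ⟨by positivity, by positivity, le_of_eq rfl⟩
    have hmax : ∀ τ' ∈ {τ : ℝ × ℝ | 0 ≤ τ.1 ∧ 0 ≤ τ.2 ∧ τ.1 + τ.2 ≤ T},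
        Gs τ' ≤ Gs (a1 / β, β / a1) := by
      intro τ' hτ'
      obtain ⟨h1, h2, h3⟩ := hτ'
      have hu : (0 : ℝ) < 1 + τ'.1 := by linarith
      have hv : (0 : ℝ) < 1 + τ'.2 := by linarith
      have hRHS : Gs (a1 / β, β / a1) = -(a1 * β) := by
        show -(a1 ^ 2) / (1 + a1 / β) - B / (1 + β / a1) = -(a1 * β)
        rw [← hβ2]
        field_simp
        ring
      rw [hRHS]
      show -(a1 ^ 2) / (1 + τ'.1) - B / (1 + τ'.2) ≤ -(a1 * β)
      rw [← hβ2]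
      have hsum : a1 * β * ((1 + τ'.1) + (1 + τ'.2)) ≤ (a1 + β) ^ 2 := by
        have e1 : a1 * β * (T + 2) = (a1 + β) ^ 2 := by
          rw [hTdef]; field_simp; ring
        nlinarith [mul_pos ha1 hβ]
      have key : a1 * β ≤ a1 ^ 2 / (1 + τ'.1) + β ^ 2 / (1 + τ'.2) := by
        rw [div_add_div _ _ hu.ne' hv.ne', le_div_iff₀ (mul_pos hu hv)]
        nlinarith [sq_nonneg (a1 * (1 + τ'.2) - β * (1 + τ'.1)),
          mul_nonneg (mul_pos hu hv).le (sub_nonneg.mpr hsum),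
          mul_pos hu hv]
      have e2 : -(a1 ^ 2) / (1 + τ'.1) = -(a1 ^ 2 / (1 + τ'.1)) := by ring
      rw [e2]
      linarith
    have := h T hTpos (a1 / β, β / a1) hmem hmax
    exact absurd this (by positivity)
  · -- condition → (i)
    intro h T hT τ hτ hmax
    obtain ⟨h1, h2, h3⟩ := hτ
    by_contra hne
    have h2' : 0 < τ.2 := lt_of_le_of_ne h2 (Ne.symm hne)
    have hK : 1 - p + p * c * (2 - c) ≤ 0 := by
      nlinarith [sq_nonneg (Real.sqrt p * (c - 1) - 1)]
    have hmem : (τ.1 + τ.2, 0) ∈ {τ' : ℝ × ℝ | 0 ≤ τ'.1 ∧ 0 ≤ τ'.2 ∧ τ'.1 + τ'.2 ≤ T} := by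
      refine ⟨show (0:ℝ) ≤ τ.1 + τ.2 by linarith, le_refl 0,
        show τ.1 + τ.2 + 0 ≤ T by linarith⟩
    have hle := hmax _ hmem
    have hd1 : (0 : ℝ) < 1 + τ.1 := by linarith
    have hd2 : (1 : ℝ) < 1 + τ.2 := by linarith
    have hd12 : 1 + τ.1 < 1 + (τ.1 + τ.2) := by linarith
    have hL : a1 ^ 2 / (1 + (τ.1 + τ.2)) < a1 ^ 2 / (1 + τ.1) :=
      div_lt_div_of_pos_left (by positivity) hd1 hd12
    set K := 1 - p + p * c * (2 - c) with hKdef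
    have hR : a2 ^ 2 * K ≤ a2 ^ 2 * K / (1 + τ.2) := by
      rw [le_div_iff₀ (by linarith)]
      nlinarith [mul_nonpos_of_nonneg_of_nonpos (sq_nonneg a2) hK]
    have hle' : -(a1 ^ 2) / (1 + (τ.1 + τ.2)) - a2 ^ 2 * K / (1 + 0) ≤
        -(a1 ^ 2) / (1 + τ.1) - a2 ^ 2 * K / (1 + τ.2) := hle
    have e0 : a2 ^ 2 * K / (1 + 0 : ℝ) = a2 ^ 2 * K := by norm_num
    rw [e0] at hle'
    have e1 : -(a1 ^ 2) / (1 + (τ.1 + τ.2)) = -(a1 ^ 2 / (1 + (τ.1 + τ.2))) := by ring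
    have e2 : -(a1 ^ 2) / (1 + τ.1) = -(a1 ^ 2 / (1 + τ.1)) := by ring
    rw [e1, e2] at hle'
    linarith
end
end
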